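/- Let M be a vertically 4-connected simple matroid with a triangle T = {a,b,c}, and let (X_a, Y_a) and (X_b, Y_b) be exact vertical 3-separations of M \ a and M \ b, respectively, with b ∈ X_a and a ∈ X_b. Then c ∈ Y_a ∩ Y_b. -/

import Mathlib

open Set Matroid

universe u

variable {α : Type u}

/-- The rank of a set `X` in a matroid `M`: the supremum of the cardinalities of the
independent subsets of `X`. -/
noncomputable def mrk (M : Matroid α) (X : Set α) : ℕ∞ :=
  ⨆ I ∈ {I : Set α | M.Indep I ∧ I ⊆ X}, I.encard

/-- The rank `r(M)` of a matroid `M`. -/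
noncomputable def mrank (M : Matroid α) : ℕ∞ := mrk M M.E

/-- The connectivity function `λ_M(X) = r(X) + r(E(M) - X) - r(M)`. -/
noncomputable def lam (M : Matroid α) (X : Set α) : ℕ∞ :=
  mrk M X + mrk M (M.E \ X) - mrank M

/-- The deletion `M \ D` of a set of elements `D` from `M`. -/
def mdel (M : Matroid α) (D : Set α) : Matroid α := M ↾ (M.E \ D)

/-- A circuit of a matroid: a minimal dependent set. -/
def MCircuit (M : Matroid α) (C : Set α) : Prop := M.Dep C ∧ ∀ D, D ⊂ C → M.Indep D

/-- A cocircuit of a matroid: a circuit of the dual matroid. -/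
def MCocircuit (M : Matroid α) (C : Set α) : Prop := MCircuit M✶ C

/-- A triangle: a 3-element circuit. -/
def IsTriangle (M : Matroid α) (T : Set α) : Prop := MCircuit M T ∧ T.encard = 3

/-- `(X, Y)` is a vertical `j`-separation of `M`: a partition of `E(M)` with
`λ_M(X) < j` and `min {r(X), r(Y)} ≥ j`. -/
def IsVSep (M : Matroid α) (j : ℕ) (X Y : Set α) : Prop :=
  X ∪ Y = M.E ∧ Disjoint X Y ∧ lam M X < (j : ℕ∞) ∧
    (j : ℕ∞) ≤ mrk M X ∧ (j : ℕ∞) ≤ mrk M Y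

/-- An exact vertical `j`-separation: one with `λ_M(X) = j - 1`. -/
def IsExactVSep (M : Matroid α) (j : ℕ) (X Y : Set α) : Prop :=
  IsVSep M j X Y ∧ lam M X = (j : ℕ∞) - 1

/-- `M` is vertically `k`-connected: it has no vertical `j`-separation for a
positive integer `j < k`. -/
def VertConn (M : Matroid α) (k : ℕ) : Prop :=
  ∀ j X Y, 0 < j → j < k → ¬ IsVSep M j X Y

/-- `(X, Y)` is a (Tutte) `j`-separation of `M`. -/
def IsSep (M : Matroid α) (j : ℕ) (X Y : Set α) : Prop :=
  X ∪ Y = M.E ∧ Disjoint X Y ∧ lam M X < (j : ℕ∞) ∧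
    (j : ℕ∞) ≤ X.encard ∧ (j : ℕ∞) ≤ Y.encard

/-- `M` is (Tutte) `k`-connected. -/
def TConn (M : Matroid α) (k : ℕ) : Prop :=
  ∀ j X Y, 0 < j → j < k → ¬ IsSep M j X Y

/-- `M` is minimally vertically 4-connected. -/
def MinVertConn4 (M : Matroid α) : Prop :=
  VertConn M 4 ∧ ∀ e ∈ M.E, ¬ VertConn (mdel M {e}) 4

/-- `M` is a simple matroid: every subset of the ground set with at most two
elements is independent (no loops and no parallel pairs). -/
def MSimple (M : Matroid α) : Prop := ∀ S ⊆ M.E, S.encard ≤ 2 → M.Indep S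

/-- `M` has a restriction isomorphic to `U_{2,4}`: a 4-element subset of the ground set
of rank 2, all of whose subsets with at most 2 elements are independent. -/
def HasU24Restriction (M : Matroid α) : Prop :=
  ∃ X ⊆ M.E, X.encard = 4 ∧ mrk M X = 2 ∧ ∀ S ⊆ X, S.encard ≤ 2 → M.Indep S

/-- The restriction `M|X` is isomorphic to `U_{2,4}`. -/
def RestrIsoU24 (M : Matroid α) (X : Set α) : Prop :=
  X ⊆ M.E ∧ X.encard = 4 ∧ mrk M X = 2 ∧ ∀ S ⊆ X, S.encard ≤ 2 → M.Indep S

/-- The restriction `M|C` is isomorphic to `U_{2,k} ⊕ U_{2,2}`: `C` is the disjoint union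
of a `k`-element rank-2 set `L` containing no loops or parallel pairs (a copy of `U_{2,k}`)
and a 2-element independent set `P` (a copy of `U_{2,2}`), with `r(C) = r(L) + r(P) = 4`,
so that the restriction is the direct sum of the two pieces. -/
def RestrIsoLinePlusPair (M : Matroid α) (C : Set α) (k : ℕ) : Prop :=
  ∃ L P, C = L ∪ P ∧ Disjoint L P ∧ L.encard = (k : ℕ∞) ∧ P.encard = 2 ∧
    M.Indep P ∧ mrk M L = 2 ∧ (∀ S ⊆ L, S.encard ≤ 2 → M.Indep S) ∧ mrk M C = 4

/-- The restriction `M|X` is isomorphic to the 2-sum `U_{2,4} ⊕₂ U_{2,4}`: `X` is the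
disjoint union of two 3-element circuits `T₁` and `T₂`, and the circuits of `M` contained
in `X` (i.e. the circuits of `M|X`) are exactly `T₁`, `T₂`, and the unions `P₁ ∪ P₂` of
2-element subsets `P₁ ⊆ T₁` and `P₂ ⊆ T₂`. -/
def RestrIsoTwoSumU24U24 (M : Matroid α) (X : Set α) : Prop :=
  X ⊆ M.E ∧ ∃ T₁ T₂ : Set α, Disjoint T₁ T₂ ∧ X = T₁ ∪ T₂ ∧
    T₁.encard = 3 ∧ T₂.encard = 3 ∧
    ∀ C ⊆ X, (MCircuit M C ↔ (C = T₁ ∨ C = T₂ ∨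
      ∃ P₁ P₂, P₁ ⊆ T₁ ∧ P₂ ⊆ T₂ ∧ P₁.encard = 2 ∧ P₂.encard = 2 ∧ C = P₁ ∪ P₂))

/-- The columns of the `GF(3)`-matrix representing `N₉`. -/
def N9Cols : Fin 9 → Fin 4 → ZMod 3 :=
  ![![1, 0, 0, 0], ![0, 1, 0, 0], ![0, 0, 1, 0], ![0, 0, 0, 1], ![0, 1, 1, -1],
    ![1, 0, 1, 1], ![1, 1, 0, 1], ![-1, 1, 1, 0], ![1, -1, 1, -1]]

/-- `M` is isomorphic to `N₉`, the 9-element rank-4 matroid represented over `GF(3)`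
by the matrix with columns `N9Cols`. -/
def IsoN9 (M : Matroid α) : Prop :=
  ∃ φ : α → Fin 9, Set.BijOn φ M.E Set.univ ∧
    ∀ I ⊆ M.E, (M.Indep I ↔ LinearIndependent (ZMod 3) fun x : I => N9Cols (φ x.1))

/-- `M` is binary: representable over the two-element field `GF(2)`, i.e. there is a
map from the ground set to a `GF(2)`-vector space under which independence in `M`
coincides with linear independence. -/
def IsBinary (M : Matroid α) : Prop :=
  ∃ (ι : Type u) (φ : α → ι → ZMod 2),
    ∀ I ⊆ M.E, (M.Indep I ↔ LinearIndependent (ZMod 2) fun x : I => φ x.1)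

/-- `M` is a uniform matroid, i.e. isomorphic to `U_{m,n}` for some `m` and `n`:
the ground set has `n` elements and a subset of the ground set is independent
exactly when it has at most `m` elements. -/
def IsUniform (M : Matroid α) : Prop :=
  ∃ m n : ℕ, M.E.encard = (n : ℕ∞) ∧ ∀ I ⊆ M.E, (M.Indep I ↔ I.encard ≤ (m : ℕ∞))


lemma le_mrk {M : Matroid α} {I X : Set α} (hI : M.Indep I) (hIX : I ⊆ X) :
    I.encard ≤ mrk M X := by
  refine le_trans ?_ (le_iSup _ I)
  simp [mrk, Set.mem_setOf_eq, hI, hIX]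

lemma mrk_le {M : Matroid α} {X : Set α} {b : ℕ∞}
    (h : ∀ I, M.Indep I → I ⊆ X → I.encard ≤ b) : mrk M X ≤ b := by
  refine iSup₂_le fun I hI => h I hI.1 hI.2

lemma mrk_mono (M : Matroid α) {X Y : Set α} (hXY : X ⊆ Y) : mrk M X ≤ mrk M Y :=
  mrk_le fun I hI hIX => le_mrk hI (hIX.trans hXY)

lemma encard_le_of_basis' {M : Matroid α} {B I X : Set α} (hB : M.IsBasis' B X)
    (hI : M.Indep I) (hIX : I ⊆ X) : I.encard ≤ B.encard := by
  by_contra h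
  push_neg at h
  obtain ⟨e, he, hind⟩ := hB.indep.augment hI h
  have hBe : B ⊆ insert e B := subset_insert _ _
  have := hB.2 ⟨hind, insert_subset (hIX he.1) hB.1.2⟩ hBe
  exact he.2 (this (mem_insert _ _))

lemma mrk_eq_of_basis' {M : Matroid α} {B X : Set α} (hB : M.IsBasis' B X) :
    mrk M X = B.encard :=
  le_antisymm (mrk_le fun I hI hIX => encard_le_of_basis' hB hI hIX)
    (le_mrk hB.indep hB.1.2)

lemma mrk_closure_eq (M : Matroid α) (X : Set α) : mrk M (M.closure X) = mrk M X := by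
  obtain ⟨B, hB⟩ := M.exists_isBasis' X
  rw [mrk_eq_of_basis' hB, mrk_eq_of_basis' hB.isBasis_closure_right.isBasis']

lemma mrk_restrict {M : Matroid α} {R X : Set α} (hXR : X ⊆ R) :
    mrk (M ↾ R) X = mrk M X := by
  unfold mrk
  apply le_antisymm <;> refine iSup₂_le fun I hI => ?_
  · exact le_trans (le_of_eq rfl) (le_iSup₂_of_le I
      ⟨(restrict_indep_iff.1 hI.1).1, hI.2⟩ le_rfl)
  · exact le_trans (le_of_eq rfl) (le_iSup₂_of_le I
      ⟨restrict_indep_iff.2 ⟨hI.1, hI.2.trans hXR⟩, hI.2⟩ le_rfl)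

lemma key_aux {M : Matroid α} (hM : VertConn M 4) {x y z : α}
    (hC : MCircuit M {x, y, z}) (hxy : x ≠ y) (hxz : x ≠ z) (hyz : y ≠ z)
    {X Y : Set α} (h : IsExactVSep (mdel M {x}) 3 X Y) (hy : y ∈ X) : z ∈ Y := by
  obtain ⟨⟨hXY, hdisj, hlt, hrX, hrY⟩, hlam⟩ := h
  have hE : (mdel M {x}).E = M.E \ {x} := rfl
  rw [hE] at hXY
  have hground : ({x, y, z} : Set α) ⊆ M.E := hC.1.subset_ground
  have hzE : z ∈ M.E := hground (by simp)
  by_contra hzY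
  have hzX : z ∈ X := by
    have hz' : z ∈ M.E \ {x} := ⟨hzE, fun h => hxz (mem_singleton_iff.1 h).symm⟩
    rw [← hXY] at hz'
    exact hz'.resolve_right hzY
  -- x is in the closure of {y, z}
  have hyzI : M.Indep {y, z} := by
    refine hC.2 {y, z} ⟨fun w hw => ?_, fun hs => ?_⟩
    · rcases hw with rfl | rfl
      · exact Or.inr (Or.inl rfl)
      · exact Or.inr (Or.inr rfl)
    · have hx : x ∈ ({y, z} : Set α) := hs (Or.inl rfl)
      rcases hx with rfl | rfl
      · exact hxy rfl
      · exact hxz rfl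
  have hxcl : x ∈ M.closure {y, z} := by
    have hdep : M.Dep (insert x {y, z}) := hC.1
    rw [hyzI.insert_dep_iff] at hdep
    exact hdep.1
  have hyzX : ({y, z} : Set α) ⊆ X := by
    intro w hw
    rcases hw with rfl | hw
    · exact hy
    · rw [mem_singleton_iff] at hw
      subst hw
      exact hzX
  have hXE : X ⊆ M.E \ {x} := by rw [← hXY]; exact subset_union_left
  have hYE : Y ⊆ M.E \ {x} := by rw [← hXY]; exact subset_union_right
  have hXE' : X ⊆ M.E := hXE.trans diff_subset
  -- closure facts
  have hxclX : x ∈ M.closure X := M.closure_subset_closure hyzX hxcl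
  have hmrkX' : mrk M (insert x X) = mrk M X := by
    apply le_antisymm
    · refine le_trans (mrk_mono M ?_) (le_of_eq (mrk_closure_eq M X))
      exact insert_subset hxclX (M.subset_closure X hXE')
    · exact mrk_mono M (subset_insert _ _)
  -- rank of M.E \ {x} equals rank of M
  have hExsub : M.E \ {x} ⊆ M.E := diff_subset
  have hyzEx : ({y, z} : Set α) ⊆ M.E \ {x} := by
    intro w hw; rcases hw with rfl | rfl
    · exact ⟨hground (by simp), fun h => hxy (by simpa using h.symm)⟩
    · exact ⟨hzE, fun h => hxz (by simpa using h.symm)⟩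
  have hErank : mrk M (M.E \ {x}) = mrank M := by
    apply le_antisymm (mrk_mono M hExsub)
    refine le_trans (mrk_mono M (X := M.E) ?_) (le_of_eq (mrk_closure_eq M (M.E \ {x})))
    intro e he
    rcases eq_or_ne e x with rfl | hex
    · exact M.closure_subset_closure hyzEx hxcl
    · exact M.subset_closure (M.E \ {x}) hExsub ⟨he, hex⟩
  -- translate mrk's
  have hrkX : mrk (mdel M {x}) X = mrk M X := mrk_restrict hXE
  have hrkY : mrk (mdel M {x}) Y = mrk M Y := mrk_restrict hYE
  have hrank : mrank (mdel M {x}) = mrank M := by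
    have h1 : mrk (mdel M {x}) (M.E \ {x}) = mrk M (M.E \ {x}) := mrk_restrict subset_rfl
    exact h1.trans hErank
  -- the complement of insert x X in M.E is Y
  have hcompl : M.E \ insert x X = Y := by
    have h1 : (M.E \ {x}) \ X = M.E \ insert x X := by
      rw [diff_diff, singleton_union]
    rw [← h1, ← hXY, union_diff_left, sdiff_eq_left.2 hdisj.symm]
  have hcomplD : (mdel M {x}).E \ X = Y := by
    rw [hE, ← hXY, union_diff_left, sdiff_eq_left.2 hdisj.symm]
  -- lam M (insert x X) = lam (mdel M {x}) X
  have hlamX' : lam M (insert x X) = lam (mdel M {x}) X := by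
    rw [lam, lam, hcompl, hcomplD, hmrkX', ← hrkX, ← hrkY, ← hrank]
  -- construct a vertical 3-separation of M
  have hxE : x ∈ M.E := hground (by simp)
  refine hM 3 (insert x X) Y (by norm_num) (by norm_num) ?_
  refine ⟨?_, ?_, ?_, ?_, ?_⟩
  · rw [insert_union, hXY, insert_diff_singleton, insert_eq_of_mem hxE]
  · rw [Set.disjoint_left]
    intro w hw hwY
    rcases hw with rfl | hw
    · exact (hYE hwY).2 rfl
    · exact hdisj.le_bot ⟨hw, hwY⟩
  · rw [hlamX']; exact hlt
  · rw [hmrkX', ← hrkX]; exact hrX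
  · rw [← hrkY]; exact hrY

/-- In the setting of the technical lemma, `c ∈ Y_a ∩ Y_b`. -/
theorem statement_8 (M : Matroid α) (hM : VertConn M 4) (hs : MSimple M)
    (a b c : α) (hT : IsTriangle M {a, b, c}) (Xa Ya Xb Yb : Set α)
    (ha : IsExactVSep (mdel M {a}) 3 Xa Ya) (hb : IsExactVSep (mdel M {b}) 3 Xb Yb)
    (hbXa : b ∈ Xa) (haXb : a ∈ Xb) :
    c ∈ Ya ∩ Yb := by
  obtain ⟨hC, hcard⟩ := hT
  have hab : a ≠ b := by
    rintro rfl
    rw [show ({a, a, c} : Set α) = {a, c} by ext w; simp only [Set.mem_insert_iff, Set.mem_singleton_iff]; tauto] at hcard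
    have hle := Set.encard_insert_le ({c} : Set α) a
    rw [hcard, Set.encard_singleton] at hle
    norm_num at hle
  have hac : a ≠ c := by
    rintro rfl
    rw [show ({a, b, a} : Set α) = {a, b} by ext w; simp only [Set.mem_insert_iff, Set.mem_singleton_iff]; tauto] at hcard
    have hle := Set.encard_insert_le ({b} : Set α) a
    rw [hcard, Set.encard_singleton] at hle
    norm_num at hle
  have hbc : b ≠ c := by
    rintro rfl
    rw [show ({a, b, b} : Set α) = {a, b} by ext w; simp only [Set.mem_insert_iff, Set.mem_singleton_iff]; tauto] at hcard
    have hle := Set.encard_insert_le ({b} : Set α) a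
    rw [hcard, Set.encard_singleton] at hle
    norm_num at hle
  constructor
  · exact key_aux hM hC hab hac hbc ha hbXa
  · have hC' : MCircuit M {b, a, c} := by
      have : ({b, a, c} : Set α) = {a, b, c} := by ext w; simp only [Set.mem_insert_iff, Set.mem_singleton_iff]; tauto
      rw [this]; exact hC
    exact key_aux hM hC' hab.symm hbc hac hb haXb
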